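/- Let S ⊆ ℝ^N be a convex set on which the Jacobian J(v) of the load-flow map F is nonsingular at every point. Then F is injective on S; in particular, for any given injections (p₁, …, p_N), there is at most one v ∈ S with F(v) = (p₁, …, p_N). -/

import Mathlib

/-- Extension of a PQ-bus voltage vector `u : Fin N → ℝ` to bus indices `{0,…,N}`:
bus `k ∈ {1,…,N}` gets voltage `u (k-1)`, and bus `0` (the slack) gets `v₀`. -/
def extV (N : ℕ) (v₀ : ℝ) (u : Fin N → ℝ) : ℕ → ℝ :=
  fun k => if h : 1 ≤ k ∧ k ≤ N then u ⟨k - 1, by omega⟩ else v₀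

/-- The load-flow map `F : ℝ^N → ℝ^N`, with
`F_n(v) = (Σ_{k∈K(n)} g_{nk}) v_n² − (Σ_{k∈K(n)} g_{nk} v_k) v_n` for the PQ bus `n = i+1`. -/
def Fmap (N : ℕ) (K : ℕ → Finset ℕ) (g : ℕ → ℕ → ℝ) (v₀ : ℝ)
    (u : Fin N → ℝ) : Fin N → ℝ :=
  fun i => (∑ k ∈ K ((i : ℕ) + 1), g ((i : ℕ) + 1) k) * (u i) ^ 2
    - (∑ k ∈ K ((i : ℕ) + 1), g ((i : ℕ) + 1) k * extV N v₀ u k) * u i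

/-- The Jacobian matrix `J(v)` of the load-flow map. -/
def Jmat (N : ℕ) (K : ℕ → Finset ℕ) (g : ℕ → ℕ → ℝ) (v₀ : ℝ)
    (u : Fin N → ℝ) : Matrix (Fin N) (Fin N) ℝ :=
  Matrix.of fun i j =>
    if i = j then
      2 * (∑ k ∈ K ((i : ℕ) + 1), g ((i : ℕ) + 1) k) * u i
        - ∑ k ∈ K ((i : ℕ) + 1), g ((i : ℕ) + 1) k * extV N v₀ u k
    else if ((j : ℕ) + 1) ∈ K ((i : ℕ) + 1) then
      -(g ((i : ℕ) + 1) ((j : ℕ) + 1) * u i)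
    else 0

lemma sum_shift (N : ℕ) (T : Finset ℕ) (hT : ∀ k ∈ T, k ≤ N) (f : ℕ → ℝ) (h0 : f 0 = 0) :
    ∑ k ∈ T, f k = ∑ j ∈ Finset.range N, if (j+1) ∈ T then f (j+1) else 0 := by
  have hsub : T ⊆ Finset.range (N+1) :=
    fun k hk => Finset.mem_range.2 (Nat.lt_succ_of_le (hT k hk))
  have h1 : ∑ k ∈ T, f k = ∑ k ∈ Finset.range (N+1), if k ∈ T then f k else 0 := by
    rw [Finset.sum_ite_mem, Finset.inter_eq_right.2 hsub]
  rw [h1, Finset.sum_range_succ']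
  simp [h0]

lemma extV_mid (N : ℕ) (v₀ : ℝ) (u w : Fin N → ℝ) (k : ℕ) :
    extV N v₀ (fun j => (u j + w j)/2) k = (extV N v₀ u k + extV N v₀ w k)/2 := by
  unfold extV
  split
  · simp
  · ring

lemma extV_succ (N : ℕ) (v₀ : ℝ) (u : Fin N → ℝ) (j : Fin N) :
    extV N v₀ u ((j : ℕ) + 1) = u j := by
  have h : 1 ≤ (j : ℕ) + 1 ∧ (j : ℕ) + 1 ≤ N := ⟨Nat.le_add_left 1 _, j.isLt⟩
  simp only [extV, dif_pos h]
  congr 1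

lemma key_identity (N : ℕ) (K : ℕ → Finset ℕ)
    (hKsub : ∀ n, n ≤ N → ∀ k ∈ K n, k ≤ N ∧ k ≠ n)
    (g : ℕ → ℕ → ℝ) (v₀ : ℝ) (u w : Fin N → ℝ) (i : Fin N) :
    Fmap N K g v₀ u i - Fmap N K g v₀ w i
      = (Jmat N K g v₀ (fun j => (u j + w j)/2)).mulVec (u - w) i := by
  set m : Fin N → ℝ := fun j => (u j + w j)/2 with hm
  have hiN : (i : ℕ) + 1 ≤ N := i.isLt
  have hK := hKsub ((i : ℕ) + 1) hiN
  set A : ℝ := ∑ k ∈ K ((i : ℕ) + 1), g ((i : ℕ) + 1) k with hA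
  set Bu : ℝ := ∑ k ∈ K ((i : ℕ) + 1), g ((i : ℕ) + 1) k * extV N v₀ u k with hBu
  set Bw : ℝ := ∑ k ∈ K ((i : ℕ) + 1), g ((i : ℕ) + 1) k * extV N v₀ w k with hBw
  have hnotmem : ((i : ℕ) + 1) ∉ K ((i : ℕ) + 1) := fun h => (hK _ h).2 rfl
  -- midpoint sum
  have hBm : (∑ k ∈ K ((i : ℕ) + 1), g ((i : ℕ) + 1) k * extV N v₀ m k) = (Bu + Bw)/2 := by
    rw [hBu, hBw, ← Finset.sum_add_distrib, Finset.sum_div]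
    refine Finset.sum_congr rfl fun k _ => ?_
    rw [hm, extV_mid]
    ring
  -- difference sum reindexed
  have h0 : g ((i : ℕ) + 1) 0 * (extV N v₀ u 0 - extV N v₀ w 0) = 0 := by simp [extV]
  have hrange : ∑ j ∈ Finset.range N, (if (j+1) ∈ K ((i : ℕ) + 1) then
        g ((i : ℕ) + 1) (j+1) * (extV N v₀ u (j+1) - extV N v₀ w (j+1)) else 0) = Bu - Bw := by
    have hs := sum_shift N (K ((i : ℕ) + 1)) (fun k hk => (hK k hk).1)
      (fun k => g ((i : ℕ) + 1) k * (extV N v₀ u k - extV N v₀ w k)) h0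
    rw [← hs, hBu, hBw, ← Finset.sum_sub_distrib]
    exact Finset.sum_congr rfl fun k _ => by ring
  rw [← Fin.sum_univ_eq_sum_range] at hrange
  have hdiff : (∑ j : Fin N, if ((j : ℕ) + 1) ∈ K ((i : ℕ) + 1) then
        g ((i : ℕ) + 1) ((j : ℕ) + 1) * (u j - w j) else 0) = Bu - Bw := by
    rw [← hrange]
    exact Finset.sum_congr rfl fun j _ => by rw [extV_succ, extV_succ]
  -- expand mulVec
  have hsplit : (Jmat N K g v₀ m).mulVec (u - w) i
      = Jmat N K g v₀ m i i * (u i - w i)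
        + ∑ j ∈ Finset.univ.erase i, Jmat N K g v₀ m i j * (u j - w j) := by
    simp only [Matrix.mulVec, dotProduct, Pi.sub_apply]
    exact (Finset.add_sum_erase _ _ (Finset.mem_univ i)).symm
  have herase : ∑ j ∈ Finset.univ.erase i, Jmat N K g v₀ m i j * (u j - w j)
      = ∑ j : Fin N, (if ((j : ℕ) + 1) ∈ K ((i : ℕ) + 1) then
          -(g ((i : ℕ) + 1) ((j : ℕ) + 1) * m i) else 0) * (u j - w j) := by
    symm
    rw [← Finset.add_sum_erase _ _ (Finset.mem_univ i), if_neg hnotmem, zero_mul, zero_add]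
    refine Finset.sum_congr rfl fun j hj => ?_
    have hji : ¬ (i = j) := fun h => (Finset.ne_of_mem_erase hj) h.symm
    simp only [Jmat, Matrix.of_apply, if_neg hji]
  have hpull : (∑ j : Fin N, (if ((j : ℕ) + 1) ∈ K ((i : ℕ) + 1) then
          -(g ((i : ℕ) + 1) ((j : ℕ) + 1) * m i) else 0) * (u j - w j))
      = -(m i) * (Bu - Bw) := by
    rw [← hdiff, Finset.mul_sum]
    refine Finset.sum_congr rfl fun j _ => ?_
    split_ifs <;> ring
  have hdiag : Jmat N K g v₀ m i i = 2 * A * m i - (Bu + Bw)/2 := by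
    simp only [Jmat, Matrix.of_apply, eq_self_iff_true, if_true, hBm]
    rfl

  have hF : Fmap N K g v₀ u i - Fmap N K g v₀ w i
      = A * (u i)^2 - Bu * u i - (A * (w i)^2 - Bw * w i) := rfl
  rw [hF, hsplit, herase, hpull, hdiag, hm]
  have : m i = (u i + w i)/2 := rfl
  ring

/-- Let `S ⊆ ℝ^N` be a convex set on which the Jacobian `J(v)` of the load-flow map `F` is
nonsingular at every point.  Then `F` is injective on `S`; in particular, for any given
injections `p`, there is at most one `v ∈ S` with `F(v) = p`. -/
theorem jacobian_nonsingular_on_convex_implies_injective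
    (N : ℕ) (hN : 1 ≤ N)
    (K : ℕ → Finset ℕ)
    (hKsub : ∀ n, n ≤ N → ∀ k ∈ K n, k ≤ N ∧ k ≠ n)
    (hKsymm : ∀ n, n ≤ N → ∀ k, k ≤ N → (k ∈ K n ↔ n ∈ K k))
    (g : ℕ → ℕ → ℝ)
    (hg : ∀ n k, k ∈ K n → 0 < g n k)
    (hgsymm : ∀ n k, g n k = g k n)
    (v₀ : ℝ) (hv₀ : 0 < v₀)
    (S : Set (Fin N → ℝ)) (hS : Convex ℝ S)
    (hJ : ∀ v ∈ S, (Jmat N K g v₀ v).det ≠ 0) :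
    Set.InjOn (Fmap N K g v₀) S ∧
    ∀ p : Fin N → ℝ, ∀ u ∈ S, ∀ w ∈ S,
      Fmap N K g v₀ u = p → Fmap N K g v₀ w = p → u = w := by
  have main : ∀ u ∈ S, ∀ w ∈ S, Fmap N K g v₀ u = Fmap N K g v₀ w → u = w := by
    intro u hu w hw hFeq
    have hmS : (fun j => (u j + w j)/2) ∈ S := by
      have h := hS hu hw (by norm_num : (0:ℝ) ≤ 1/2) (by norm_num : (0:ℝ) ≤ 1/2)
        (by norm_num : (1/2 : ℝ) + 1/2 = 1)
      have heq : (1/2 : ℝ) • u + (1/2 : ℝ) • w = fun j => (u j + w j)/2 := by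
        funext j
        simp [Pi.add_apply, Pi.smul_apply]
        ring
      rwa [heq] at h
    have hzero : (Jmat N K g v₀ (fun j => (u j + w j)/2)).mulVec (u - w) = 0 := by
      funext i
      have hki := key_identity N K hKsub g v₀ u w i
      rw [hFeq] at hki
      simpa using hki.symm
    have hunit : IsUnit (Jmat N K g v₀ (fun j => (u j + w j)/2)).det :=
      isUnit_iff_ne_zero.2 (hJ _ hmS)
    have hd : u - w = 0 := by
      have h1 : (Jmat N K g v₀ (fun j => (u j + w j)/2))⁻¹.mulVec
          ((Jmat N K g v₀ (fun j => (u j + w j)/2)).mulVec (u - w)) = u - w := by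
        rw [Matrix.mulVec_mulVec, Matrix.nonsing_inv_mul _ hunit, Matrix.one_mulVec]
      rw [hzero, Matrix.mulVec_zero] at h1
      exact h1.symm
    exact sub_eq_zero.1 hd
  exact ⟨fun u hu w hw h => main u hu w hw h,
    fun p u hu w hw h1 h2 => main u hu w hw (h1.trans h2.symm)⟩
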